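/- Let ν > 10 and r > 10. Then the main part of the Schläfli integral representation of the Bessel function satisfies the uniform decay estimate |∫₀^π e^{i(r sin θ − ν θ)} dθ| ≤ C (1 + |r² − ν²|)^{−1/4} for an absolute constant C independent of r and ν. -/

import Mathlib

open Real intervalIntegral

noncomputable def EE (r ν : ℝ) (θ : ℝ) : ℂ :=
  Complex.exp (Complex.I * ((r * Real.sin θ - ν * θ : ℝ) : ℂ))

lemma hasDerivAt_EE (r ν θ : ℝ) :
    HasDerivAt (fun θ => EE r ν θ) (Complex.I * ((r * Real.cos θ - ν : ℝ) : ℂ) * EE r ν θ) θ := by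
  have h1 : HasDerivAt (fun θ : ℝ => r * Real.sin θ - ν * θ) (r * Real.cos θ - ν) θ := by
    exact (((Real.hasDerivAt_sin θ).const_mul r).sub ((hasDerivAt_id θ).const_mul ν)).congr_deriv (by ring)
  have h2 := (h1.ofReal_comp.const_mul Complex.I).cexp
  simpa [EE, mul_comm, mul_assoc, mul_left_comm] using h2

lemma norm_EE (r ν θ : ℝ) : ‖EE r ν θ‖ = 1 := by
  rw [EE, Complex.norm_exp, Complex.mul_re, Complex.I_re, Complex.I_im, Complex.ofReal_re, Complex.ofReal_im]; simp

lemma cont_EE (r ν : ℝ) : Continuous (fun θ => EE r ν θ) := by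
  apply Complex.continuous_exp.comp
  exact continuous_const.mul (Complex.continuous_ofReal.comp (by continuity))

lemma key_alg (Ec : ℂ) (wv sv : ℝ) (hw : (wv : ℂ) ≠ 0) :
    (Complex.I * (wv:ℂ) * Ec * (Complex.I * wv) - Ec * (Complex.I * ((-(sv) : ℝ):ℂ))) / (Complex.I * wv)^2
      = Ec - Ec * Complex.I * ((sv / wv^2 : ℝ) : ℂ) := by
  push_cast
  field_simp
  ring_nf
  rw [Complex.I_sq]
  ring

lemma lem1 (r ν μ a b : ℝ) (hr : 0 ≤ r) (ha : 0 ≤ a) (hab : a ≤ b) (hb : b ≤ π)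
    (hμ : 0 < μ)
    (hsign : (∀ θ ∈ Set.Icc a b, μ ≤ r * Real.cos θ - ν) ∨
             (∀ θ ∈ Set.Icc a b, r * Real.cos θ - ν ≤ -μ)) :
    ‖∫ θ in a..b, EE r ν θ‖ ≤ 3 / μ := by
  set g : ℝ → ℝ := fun θ => r * Real.cos θ - ν with hg
  have huIcc : Set.uIcc a b = Set.Icc a b := Set.uIcc_of_le hab
  have hgabs : ∀ θ ∈ Set.Icc a b, μ ≤ |g θ| := by
    intro θ hθ
    rcases hsign with h | h
    · exact le_trans (h θ hθ) (le_abs_self _)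
    · have h1 := h θ hθ
      have h2 : μ ≤ -g θ := by simp only [hg]; linarith
      exact h2.trans (neg_le_abs _)
  have hgne : ∀ θ ∈ Set.Icc a b, g θ ≠ 0 := by
    intro θ hθ h0
    have := hgabs θ hθ; rw [h0] at this; simp at this; linarith
  have hgC : Continuous g := by simp only [hg]; continuity
  have hgd : ∀ θ : ℝ, HasDerivAt g (-(r * Real.sin θ)) θ := by
    intro θ
    exact (((Real.hasDerivAt_cos θ).const_mul r).sub (hasDerivAt_const θ ν)).congr_deriv (by ring)
  set q : ℝ → ℝ := fun θ => r * Real.sin θ / (g θ)^2 with hq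
  set err : ℝ → ℂ := fun θ => EE r ν θ * Complex.I * (q θ : ℂ) with herr
  set G : ℝ → ℂ := fun θ => EE r ν θ / (Complex.I * (g θ : ℂ)) with hG
  have hGd : ∀ θ ∈ Set.uIcc a b, HasDerivAt G (EE r ν θ - err θ) θ := by
    intro θ hθ
    rw [huIcc] at hθ
    have hne : (g θ : ℂ) ≠ 0 := Complex.ofReal_ne_zero.mpr (hgne θ hθ)
    have hne2 : Complex.I * (g θ : ℂ) ≠ 0 := mul_ne_zero Complex.I_ne_zero hne
    have hden : HasDerivAt (fun θ => Complex.I * (g θ : ℂ)) (Complex.I * ((-(r * Real.sin θ) : ℝ) : ℂ)) θ :=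
      ((hgd θ).ofReal_comp.const_mul Complex.I)
    have h5 := ((hasDerivAt_EE r ν θ).div hden hne2)
    have hgθ : (r * Real.cos θ - ν) = g θ := by rw [hg]
    refine h5.congr_deriv ?_
    simp only [herr, hq]
    rw [hgθ, key_alg (EE r ν θ) (g θ) (r * Real.sin θ) hne]
  have hcont_err : ContinuousOn err (Set.uIcc a b) := by
    rw [huIcc, herr]
    apply ((cont_EE r ν).continuousOn.mul continuousOn_const).mul
    apply Complex.continuous_ofReal.comp_continuousOn
    exact (continuous_const.mul Real.continuous_sin).continuousOn.div
      ((hgC.pow 2).continuousOn) (fun θ hθ => pow_ne_zero _ (hgne θ hθ))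
  have hint : IntervalIntegrable (fun θ => EE r ν θ - err θ) MeasureTheory.volume a b :=
    ((cont_EE r ν).continuousOn.sub hcont_err).intervalIntegrable
  have hFTC := intervalIntegral.integral_eq_sub_of_hasDerivAt hGd hint
  have hintE : IntervalIntegrable (fun θ => EE r ν θ) MeasureTheory.volume a b :=
    (cont_EE r ν).intervalIntegrable a b
  have hinterr : IntervalIntegrable err MeasureTheory.volume a b :=
    hcont_err.intervalIntegrable
  have h2 : (∫ θ in a..b, EE r ν θ) - (∫ θ in a..b, err θ) = G b - G a := by
    rw [← intervalIntegral.integral_sub hintE hinterr]; exact hFTC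
  have hsplit : ∫ θ in a..b, EE r ν θ = (G b - G a) + ∫ θ in a..b, err θ := by
    linear_combination h2
  -- bound the boundary terms
  have hGnorm : ∀ θ ∈ Set.Icc a b, ‖G θ‖ ≤ 1 / μ := by
    intro θ hθ
    rw [hG]
    simp only [norm_div, norm_mul, Complex.norm_I, Complex.norm_real, norm_EE, one_mul,
      Real.norm_eq_abs]
    rw [div_le_div_iff₀ (lt_of_lt_of_le hμ (hgabs θ hθ)) hμ]
    have := hgabs θ hθ; linarith
  -- norm of err equals q
  have hq_nonneg : ∀ θ ∈ Set.Icc a b, 0 ≤ q θ := by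
    intro θ hθ
    apply div_nonneg (mul_nonneg hr (Real.sin_nonneg_of_nonneg_of_le_pi (le_trans ha hθ.1) (le_trans hθ.2 hb)))
    positivity
  have hnorm_err : ∀ θ ∈ Set.uIcc a b, ‖err θ‖ = q θ := by
    intro θ hθ
    rw [huIcc] at hθ
    rw [herr]
    simp only [norm_mul, Complex.norm_I, Complex.norm_real, norm_EE, one_mul, Real.norm_eq_abs]
    exact abs_of_nonneg (hq_nonneg θ hθ)
  have hq_cont : ContinuousOn q (Set.uIcc a b) := by
    rw [huIcc, hq]
    exact (continuous_const.mul Real.continuous_sin).continuousOn.div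
      ((hgC.pow 2).continuousOn) (fun θ hθ => pow_ne_zero _ (hgne θ hθ))
  have hq_int : IntervalIntegrable q MeasureTheory.volume a b := hq_cont.intervalIntegrable
  have hqFTC : ∫ θ in a..b, q θ = (g b)⁻¹ - (g a)⁻¹ := by
    apply intervalIntegral.integral_eq_sub_of_hasDerivAt
    · intro θ hθ
      rw [huIcc] at hθ
      have := (hgd θ).inv (hgne θ hθ)
      exact this.congr_deriv (by show - -(r * Real.sin θ) / g θ ^ 2 = r * Real.sin θ / g θ ^ 2; ring)
    · exact hq_int
  have herr_bound : ‖∫ θ in a..b, err θ‖ ≤ 1 / μ := by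
    calc ‖∫ θ in a..b, err θ‖ ≤ ∫ θ in a..b, ‖err θ‖ :=
          intervalIntegral.norm_integral_le_integral_norm hab
      _ = ∫ θ in a..b, q θ := intervalIntegral.integral_congr hnorm_err
      _ = (g b)⁻¹ - (g a)⁻¹ := hqFTC
      _ ≤ 1 / μ := by
          rcases hsign with h | h
          · have hb' : μ ≤ g b := h b ⟨hab, le_refl b⟩
            have ha' : μ ≤ g a := h a ⟨le_refl a, hab⟩
            have h1 : (g b)⁻¹ ≤ μ⁻¹ := by
              apply inv_anti₀ hμ hb'
            have h2 : 0 < (g a)⁻¹ := inv_pos.mpr (lt_of_lt_of_le hμ ha')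
            rw [one_div]; linarith
          · have hb' : g b ≤ -μ := h b ⟨hab, le_refl b⟩
            have ha' : g a ≤ -μ := h a ⟨le_refl a, hab⟩
            have hga : g a < 0 := by linarith
            have hgb : g b < 0 := by linarith
            have h1 : (g b)⁻¹ < 0 := inv_neg''.mpr hgb
            have h2 : -(g a)⁻¹ = (-(g a))⁻¹ := by rw [inv_neg]
            have h3 : (-(g a))⁻¹ ≤ μ⁻¹ := inv_anti₀ hμ (by linarith)
            rw [one_div]; linarith
  calc ‖∫ θ in a..b, EE r ν θ‖ = ‖(G b - G a) + ∫ θ in a..b, err θ‖ := by rw [hsplit]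
    _ ≤ ‖G b - G a‖ + ‖∫ θ in a..b, err θ‖ := norm_add_le _ _
    _ ≤ (‖G b‖ + ‖G a‖) + ‖∫ θ in a..b, err θ‖ := by
        have := norm_sub_le (G b) (G a); linarith
    _ ≤ (1 / μ + 1 / μ) + 1 / μ := by
        have h1 := hGnorm b ⟨hab, le_refl b⟩
        have h2 := hGnorm a ⟨le_refl a, hab⟩
        linarith
    _ = 3 / μ := by ring

lemma lem2 (r ν lam a b : ℝ) (ha : 0 ≤ a) (hab : a ≤ b) (hb : b ≤ π) (hlam : 0 < lam)
    (hsin : ∀ θ ∈ Set.Icc a b, lam ≤ r * Real.sin θ) :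
    ‖∫ θ in a..b, EE r ν θ‖ ≤ 8 / Real.sqrt lam := by
  set μ := Real.sqrt lam with hμdef
  have hμ : 0 < μ := Real.sqrt_pos.mpr hlam
  have hμsq : μ * μ = lam := Real.mul_self_sqrt hlam.le
  have hr : 0 < r := by
    have h1 := hsin a ⟨le_refl a, hab⟩
    have h2 : 0 ≤ Real.sin a := Real.sin_nonneg_of_nonneg_of_le_pi ha (hab.trans hb)
    nlinarith
  set g : ℝ → ℝ := fun θ => r * Real.cos θ - ν with hg
  have hganti : ∀ x ∈ Set.Icc a b, ∀ y ∈ Set.Icc a b, x ≤ y → g y ≤ g x := by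
    intro x hx y hy hxy
    have := Real.cos_le_cos_of_nonneg_of_le_pi (ha.trans hx.1) (hy.2.trans hb) hxy
    simp only [hg]
    nlinarith
  have hgC : Continuous g := by simp only [hg]; continuity
  have hrate : ∀ x ∈ Set.Icc a b, ∀ y ∈ Set.Icc a b, x ≤ y → lam * (y - x) ≤ g x - g y := by
    intro x hx y hy hxy
    have hFTC : ∫ θ in x..y, r * Real.sin θ = g x - g y := by
      have hd : ∀ θ ∈ Set.uIcc x y, HasDerivAt (fun θ => -g θ) (r * Real.sin θ) θ := by
        intro θ _
        have := (((Real.hasDerivAt_cos θ).const_mul r).sub (hasDerivAt_const θ ν)).neg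
        exact this.congr_deriv (by ring)
      have hint : IntervalIntegrable (fun θ => r * Real.sin θ) MeasureTheory.volume x y :=
        (continuous_const.mul Real.continuous_sin).intervalIntegrable x y
      rw [intervalIntegral.integral_eq_sub_of_hasDerivAt hd hint]; ring
    rw [← hFTC]
    have hconst : ∫ θ in x..y, lam = lam * (y - x) := by simp [mul_comm]
    rw [← hconst]
    apply intervalIntegral.integral_mono_on hxy intervalIntegrable_const
      ((continuous_const.mul Real.continuous_sin).intervalIntegrable x y)
    intro θ hθ
    exact hsin θ ⟨hx.1.trans hθ.1, hθ.2.trans hy.2⟩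
  have h38 : (3:ℝ)/μ ≤ 8/μ := by gcongr <;> norm_num
  by_cases hcase1 : μ ≤ g b
  · refine le_trans ?_ h38
    apply lem1 r ν μ a b hr.le ha hab hb hμ
    left
    intro θ hθ
    exact hcase1.trans (hganti θ hθ b ⟨hab, le_refl b⟩ hθ.2)
  by_cases hcase2 : g a ≤ -μ
  · refine le_trans ?_ h38
    apply lem1 r ν μ a b hr.le ha hab hb hμ
    right
    intro θ hθ
    exact le_trans (hganti a ⟨le_refl a, hab⟩ θ hθ hθ.1) hcase2
  push_neg at hcase1 hcase2
  -- find α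
  obtain ⟨α, hαmem, hαbound, hαle, hαge⟩ :
      ∃ α ∈ Set.Icc a b, ‖∫ θ in a..α, EE r ν θ‖ ≤ 3 / μ ∧ g α ≤ μ ∧ -μ ≤ g α := by
    by_cases hga : μ ≤ g a
    · obtain ⟨α, hαmem, hgα⟩ : ∃ α ∈ Set.Icc a b, g α = μ := by
        exact intermediate_value_Icc' hab hgC.continuousOn ⟨hcase1.le, hga⟩
      refine ⟨α, hαmem, ?_, le_of_eq hgα, by linarith [hμ.le]⟩
      apply lem1 r ν μ a α hr.le ha hαmem.1 (hαmem.2.trans hb) hμ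
      left
      intro θ hθ
      have : g α ≤ g θ := hganti θ ⟨hθ.1, hθ.2.trans hαmem.2⟩ α hαmem hθ.2
      exact le_trans (le_of_eq hgα.symm) this
    · push_neg at hga
      refine ⟨a, ⟨le_refl a, hab⟩, ?_, hga.le, hcase2.le⟩
      simp [intervalIntegral.integral_same]
      positivity
  -- find β
  obtain ⟨β, hβmem, hβbound, hβge⟩ :
      ∃ β ∈ Set.Icc α b, ‖∫ θ in β..b, EE r ν θ‖ ≤ 3 / μ ∧ -μ ≤ g β := by
    by_cases hgb : g b ≤ -μ
    · obtain ⟨β, hβmem, hgβ⟩ : ∃ β ∈ Set.Icc α b, g β = -μ := by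
        have := intermediate_value_Icc' hαmem.2 (hgC.continuousOn.mono
          (Set.Icc_subset_Icc hαmem.1 (le_refl b)))
        exact this ⟨hgb, hαge⟩
      have hβmem' : β ∈ Set.Icc a b := ⟨hαmem.1.trans hβmem.1, hβmem.2⟩
      refine ⟨β, hβmem, ?_, le_of_eq hgβ.symm⟩
      apply lem1 r ν μ β b hr.le (ha.trans hβmem'.1) hβmem.2 hb hμ
      right
      intro θ hθ
      have : g θ ≤ g β := hganti β hβmem' θ ⟨hβmem'.1.trans hθ.1, hθ.2⟩ hθ.1
      exact le_trans this (le_of_eq hgβ)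
    · push_neg at hgb
      refine ⟨b, ⟨hαmem.2, le_refl b⟩, ?_, hgb.le⟩
      simp [intervalIntegral.integral_same]
      positivity
  -- length of middle interval
  have hβα : β - α ≤ 2 / μ := by
    have h1 := hrate α hαmem β ⟨hαmem.1.trans hβmem.1, hβmem.2⟩ hβmem.1
    have h2 : lam * (β - α) ≤ 2 * μ := by linarith
    rw [le_div_iff₀ hμ]
    nlinarith [h2, hμsq, hμ, mul_pos hμ hμ]
  have hmid : ‖∫ θ in α..β, EE r ν θ‖ ≤ 2 / μ := by
    have h1 : ‖∫ θ in α..β, EE r ν θ‖ ≤ 1 * |β - α| := by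
      apply intervalIntegral.norm_integral_le_of_norm_le_const
      intro θ _
      rw [norm_EE]
    rw [abs_of_nonneg (by linarith [hβmem.1] : (0:ℝ) ≤ β - α)] at h1
    linarith
  -- combine
  have hi1 : IntervalIntegrable (fun θ => EE r ν θ) MeasureTheory.volume a α :=
    (cont_EE r ν).intervalIntegrable _ _
  have hi2 : IntervalIntegrable (fun θ => EE r ν θ) MeasureTheory.volume α β :=
    (cont_EE r ν).intervalIntegrable _ _
  have hi3 : IntervalIntegrable (fun θ => EE r ν θ) MeasureTheory.volume β b :=
    (cont_EE r ν).intervalIntegrable _ _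
  have hsum : ∫ θ in a..b, EE r ν θ =
      (∫ θ in a..α, EE r ν θ) + (∫ θ in α..β, EE r ν θ) + (∫ θ in β..b, EE r ν θ) := by
    rw [intervalIntegral.integral_add_adjacent_intervals hi1 hi2,
      intervalIntegral.integral_add_adjacent_intervals (hi1.trans hi2) hi3]
  rw [hsum]
  calc ‖_ + _ + _‖ ≤ ‖(∫ θ in a..α, EE r ν θ) + (∫ θ in α..β, EE r ν θ)‖ + ‖∫ θ in β..b, EE r ν θ‖ :=
        norm_add_le _ _
    _ ≤ ‖∫ θ in a..α, EE r ν θ‖ + ‖∫ θ in α..β, EE r ν θ‖ + ‖∫ θ in β..b, EE r ν θ‖ := by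
        have := norm_add_le (∫ θ in a..α, EE r ν θ) (∫ θ in α..β, EE r ν θ); linarith
    _ ≤ 3/μ + 2/μ + 3/μ := by linarith
    _ = 8/μ := by ring

lemma sin_lip (x y : ℝ) : |Real.sin x - Real.sin y| ≤ |x - y| := by
  rw [Real.sin_sub_sin, abs_mul, abs_mul]
  have h1 : |Real.sin ((x - y) / 2)| ≤ |(x - y) / 2| := Real.abs_sin_le_abs
  have h2 : |Real.cos ((x + y) / 2)| ≤ 1 := Real.abs_cos_le_one _
  have h3 : |(x - y) / 2| = |x - y| / 2 := by rw [abs_div]; norm_num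
  have h4 : |(2:ℝ)| = 2 := by norm_num
  rw [h4]
  nlinarith [abs_nonneg (Real.sin ((x - y) / 2)), abs_nonneg ((x-y)/2), abs_nonneg (x-y),
    abs_nonneg (Real.cos ((x + y) / 2))]

lemma cos_diff (x y c : ℝ) (hxy : x ≤ y) (hs : ∀ t ∈ Set.Icc x y, c ≤ Real.sin t) :
    c * (y - x) ≤ Real.cos x - Real.cos y := by
  rw [← integral_sin]
  have hconst : ∫ t in x..y, c = c * (y - x) := by simp [mul_comm]
  rw [← hconst]
  exact intervalIntegral.integral_mono_on hxy intervalIntegrable_const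
    (Real.continuous_sin.intervalIntegrable _ _) hs

lemma reduce (I X Λ : ℝ) (hΛ : 1 ≤ Λ) (hX : 0 < X) (hΛX : Λ ≤ 16 * X^4)
    (hI : I ≤ 50 / X) : I ≤ 100 * Λ ^ (-(1:ℝ)/4) := by
  have hΛ0 : (0:ℝ) < Λ := by linarith
  set P := Λ ^ ((1:ℝ)/4) with hP
  have hP0 : 0 < P := Real.rpow_pos_of_pos hΛ0 _
  have hP4 : P ^ (4:ℕ) = Λ := by
    rw [hP, ← Real.rpow_natCast (Λ ^ ((1:ℝ)/4)) 4, ← Real.rpow_mul hΛ0.le]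
    norm_num
  have hPle : P ≤ 2 * X := by
    apply le_of_pow_le_pow_left₀ (n := 4) (by norm_num) (by positivity)
    rw [hP4]; nlinarith
  have hneg : Λ ^ (-(1:ℝ)/4) = P⁻¹ := by
    rw [show (-(1:ℝ)/4) = -((1:ℝ)/4) by ring, Real.rpow_neg hΛ0.le, hP]
  rw [hneg]
  have h1 : (50:ℝ) / X = 100 / (2 * X) := by field_simp; ring
  have h2 : (100:ℝ) / (2 * X) ≤ 100 / P :=
    div_le_div_of_nonneg_left (by norm_num) hP0 hPle
  calc I ≤ 50 / X := hI
    _ = 100 / (2 * X) := h1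
    _ ≤ 100 / P := h2
    _ = 100 * P⁻¹ := by rw [div_eq_mul_inv]

lemma sqrt_half_sq_bound (x : ℝ) (hx : 0 < x) : 8 / Real.sqrt (x^2/2) ≤ 16 / x := by
  have h1 : x / 2 ≤ Real.sqrt (x^2/2) := by
    have h2 : Real.sqrt ((x/2)^2) ≤ Real.sqrt (x^2/2) := Real.sqrt_le_sqrt (by nlinarith)
    rwa [Real.sqrt_sq (by positivity)] at h2
  calc 8 / Real.sqrt (x^2/2) ≤ 8 / (x/2) :=
        div_le_div_of_nonneg_left (by norm_num) (by positivity) h1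
    _ = 16 / x := by field_simp; ring

lemma split_three (r ν a₁ a₂ a₃ a₄ c₁ c₂ c₃ : ℝ)
    (h1 : ‖∫ θ in a₁..a₂, EE r ν θ‖ ≤ c₁) (h2 : ‖∫ θ in a₂..a₃, EE r ν θ‖ ≤ c₂)
    (h3 : ‖∫ θ in a₃..a₄, EE r ν θ‖ ≤ c₃) :
    ‖∫ θ in a₁..a₄, EE r ν θ‖ ≤ c₁ + c₂ + c₃ := by
  have hi1 : IntervalIntegrable (fun θ => EE r ν θ) MeasureTheory.volume a₁ a₂ :=
    (cont_EE r ν).intervalIntegrable _ _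
  have hi2 : IntervalIntegrable (fun θ => EE r ν θ) MeasureTheory.volume a₂ a₃ :=
    (cont_EE r ν).intervalIntegrable _ _
  have hi3 : IntervalIntegrable (fun θ => EE r ν θ) MeasureTheory.volume a₃ a₄ :=
    (cont_EE r ν).intervalIntegrable _ _
  have hsum : ∫ θ in a₁..a₄, EE r ν θ =
      (∫ θ in a₁..a₂, EE r ν θ) + (∫ θ in a₂..a₃, EE r ν θ) + (∫ θ in a₃..a₄, EE r ν θ) := by
    rw [intervalIntegral.integral_add_adjacent_intervals hi1 hi2,
      intervalIntegral.integral_add_adjacent_intervals (hi1.trans hi2) hi3]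
  rw [hsum]
  calc ‖_ + _ + _‖ ≤ ‖(∫ θ in a₁..a₂, EE r ν θ) + (∫ θ in a₂..a₃, EE r ν θ)‖ +
        ‖∫ θ in a₃..a₄, EE r ν θ‖ := norm_add_le _ _
    _ ≤ ‖∫ θ in a₁..a₂, EE r ν θ‖ + ‖∫ θ in a₂..a₃, EE r ν θ‖ + ‖∫ θ in a₃..a₄, EE r ν θ‖ := by
        have := norm_add_le (∫ θ in a₁..a₂, EE r ν θ) (∫ θ in a₂..a₃, EE r ν θ); linarith
    _ ≤ c₁ + c₂ + c₃ := by linarith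

lemma trivial_bound (r ν a b : ℝ) (hab : a ≤ b) : ‖∫ θ in a..b, EE r ν θ‖ ≤ b - a := by
  have h1 : ‖∫ θ in a..b, EE r ν θ‖ ≤ 1 * |b - a| := by
    apply intervalIntegral.norm_integral_le_of_norm_le_const
    intro θ _
    rw [norm_EE]
  rwa [abs_of_nonneg (by linarith), one_mul] at h1

set_option maxHeartbeats 2000000 in
/-- Uniform decay estimate for the main part of the Schläfli integral
representation of the Bessel function. -/
theorem schlafli_main_uniform_decay :
    ∃ C > 0, ∀ r ν : ℝ, ν > 10 → r > 10 →
      ‖∫ θ in (0 : ℝ)..π, Complex.exp (Complex.I * (r * Real.sin θ - ν * θ))‖ ≤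
        C * (1 + |r ^ 2 - ν ^ 2|) ^ (-(1 : ℝ) / 4) := by
  refine ⟨100, by norm_num, ?_⟩
  intro r ν hν hr
  have hrpos : (0:ℝ) < r := by linarith
  have hνpos : (0:ℝ) < ν := by linarith
  have hEq : (∫ θ in (0:ℝ)..π, Complex.exp (Complex.I * (r * Real.sin θ - ν * θ))) =
      ∫ θ in (0:ℝ)..π, EE r ν θ := by
    apply intervalIntegral.integral_congr
    intro θ _
    simp only [EE]
    push_cast
    ring_nf
  rw [hEq]
  set D := r ^ 2 - ν ^ 2 with hD
  have hΛ : 1 ≤ 1 + |D| := by linarith [abs_nonneg D]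
  obtain ⟨u, hu0, hu3⟩ : ∃ u : ℝ, 0 < u ∧ u ^ (3:ℕ) = r := by
    refine ⟨r ^ ((1:ℝ)/3), Real.rpow_pos_of_pos hrpos _, ?_⟩
    rw [← Real.rpow_natCast (r ^ ((1:ℝ)/3)) 3, ← Real.rpow_mul hrpos.le]
    norm_num
  have hu2 : 2 ≤ u := by
    apply le_of_pow_le_pow_left₀ (n := 3) (by norm_num) hu0.le
    rw [hu3]; nlinarith
  have hπ3 : (3:ℝ) ≤ π := Real.pi_gt_three.le
  have hπ4 : π ≤ 4 := Real.pi_le_four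
  by_cases hcase : |D| ≤ u ^ (4:ℕ)
  · -- Case A
    apply reduce _ u _ hΛ hu0 (by nlinarith) ?_
    set δ := 1/u with hδ
    have hδ0 : 0 < δ := by positivity
    have hδhalf : δ ≤ 1/2 := by
      rw [hδ, div_le_div_iff₀ hu0 (by norm_num)]; linarith
    have hsinlow : ∀ θ ∈ Set.Icc δ (π - δ), u^2/2 ≤ r * Real.sin θ := by
      intro θ hθ
      have h2pi : (1:ℝ)/2 ≤ 2/π := by
        rw [div_le_div_iff₀ (by norm_num) Real.pi_pos]; linarith
      have key : (2/π) * δ ≤ Real.sin θ := by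
        rcases le_or_gt θ (π/2) with h | h
        · have h5 := Real.mul_le_sin (le_trans hδ0.le hθ.1) h
          have h6 : (2/π) * δ ≤ 2/π * θ := by
            apply mul_le_mul_of_nonneg_left hθ.1 (by positivity)
          linarith
        · rw [← Real.sin_pi_sub]
          have h5 := Real.mul_le_sin (x := π - θ) (by linarith [hθ.2]) (by linarith)
          have h6 : (2/π) * δ ≤ 2/π * (π - θ) := by
            apply mul_le_mul_of_nonneg_left (by linarith [hθ.2]) (by positivity)
          linarith
      have k1 : δ/2 ≤ Real.sin θ := by nlinarith [hδ0]
      have k2 : r * (δ/2) ≤ r * Real.sin θ := mul_le_mul_of_nonneg_left k1 hrpos.le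
      have k3 : r * (δ/2) = u^2/2 := by
        rw [hδ, ← hu3]; field_simp
      linarith
    have p1 : ‖∫ θ in (0:ℝ)..δ, EE r ν θ‖ ≤ δ := by
      have := trivial_bound r ν 0 δ hδ0.le; simpa using this
    have p3 : ‖∫ θ in (π - δ)..π, EE r ν θ‖ ≤ δ := by
      have := trivial_bound r ν (π - δ) π (by linarith); simpa using this
    have p2 : ‖∫ θ in δ..(π - δ), EE r ν θ‖ ≤ 16/u := by
      have hb := lem2 r ν (u^2/2) δ (π - δ) hδ0.le (by linarith) (by linarith)
        (by positivity) hsinlow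
      have := sqrt_half_sq_bound u hu0
      linarith
    have htot := split_three r ν 0 δ (π - δ) π δ (16/u) δ p1 p2 p3
    have hδu : δ = 1/u := hδ
    calc ‖∫ θ in (0:ℝ)..π, EE r ν θ‖ ≤ δ + 16/u + δ := htot
      _ ≤ 50 / u := by
          rw [hδu, ← add_div, ← add_div]
          gcongr <;> norm_num
  · -- Case B
    push_neg at hcase
    have hDpos : 0 < |D| := lt_trans (by positivity) hcase
    obtain ⟨w, hw0, hw4⟩ : ∃ w : ℝ, 0 < w ∧ w ^ (4:ℕ) = |D| := by
      refine ⟨|D| ^ ((1:ℝ)/4), Real.rpow_pos_of_pos hDpos _, ?_⟩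
      rw [← Real.rpow_natCast (|D| ^ ((1:ℝ)/4)) 4, ← Real.rpow_mul hDpos.le]
      norm_num
    have hwu : u ≤ w := by
      apply le_of_pow_le_pow_left₀ (n := 4) (by norm_num) hw0.le
      rw [hw4]; nlinarith
    have hw2 : 2 ≤ w := le_trans hu2 hwu
    have hw3r : r ≤ w ^ (3:ℕ) := by
      calc r = u ^ (3:ℕ) := hu3.symm
        _ ≤ w ^ (3:ℕ) := pow_le_pow_left₀ hu0.le hwu 3
    apply reduce _ w _ hΛ hw0 (by nlinarith) ?_
    rcases le_or_gt r ν with hνr | hrν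
    · -- B1 : ν ≥ r
      have hDneg : D < 0 := by
        rcases lt_or_eq_of_le hνr with h | h
        · rw [hD]; nlinarith
        · exfalso; rw [hD, h] at hDpos; simp at hDpos
      have hDval : |D| = ν^2 - r^2 := by rw [abs_of_neg hDneg, hD]; ring
      have hμpos : 0 < ν - r := by nlinarith [hDval ▸ hDpos]
      have hbound : ‖∫ θ in (0:ℝ)..π, EE r ν θ‖ ≤ 3 / (ν - r) := by
        apply lem1 r ν (ν - r) 0 π hrpos.le le_rfl Real.pi_pos.le le_rfl hμpos
        right
        intro θ _
        have := Real.cos_le_one θ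
        nlinarith
      have hν2w : ν ≤ 2 * w^(3:ℕ) := by
        rcases le_or_gt ν (2*r) with h | h
        · linarith [hw3r]
        · have h34 : (3/4) * ν^2 ≤ w^(4:ℕ) := by rw [hw4, hDval]; nlinarith
          have hwsq : ν/2 ≤ w^2 := by nlinarith [pow_pos hw0 2, sq_nonneg (w^2 - ν/2)]
          nlinarith [pow_pos hw0 2]
      have hkey : w ≤ 4 * (ν - r) := by
        have h1 : w^(4:ℕ) ≤ 4 * (ν - r) * w^(3:ℕ) := by
          rw [hw4, hDval]; nlinarith
        nlinarith [pow_pos hw0 3]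
      calc ‖∫ θ in (0:ℝ)..π, EE r ν θ‖ ≤ 3 / (ν - r) := hbound
        _ ≤ 12 / w := by rw [div_le_div_iff₀ hμpos hw0]; linarith
        _ ≤ 50 / w := by gcongr <;> norm_num
    · -- B2 : r > ν
      have hDposs : 0 < D := by rw [hD]; nlinarith
      have hDval : |D| = r^2 - ν^2 := by rw [abs_of_pos hDposs, hD]
      have hw4' : w^(4:ℕ) = r^2 - ν^2 := by rw [hw4, hDval]
      set x₀ := ν / r with hx₀
      have hx00 : 0 < x₀ := by positivity
      have hx01 : x₀ < 1 := by rw [hx₀, div_lt_one hrpos]; exact hrν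
      set θ₀ := Real.arccos x₀ with hθ₀
      have hθ₀pos : 0 < θ₀ := Real.arccos_pos.mpr hx01
      have hθ₀lt : θ₀ < π/2 := Real.arccos_lt_pi_div_two.mpr hx00
      have hcos : Real.cos θ₀ = x₀ := Real.cos_arccos (by linarith) hx01.le
      have hrcos : r * Real.cos θ₀ = ν := by rw [hcos, hx₀]; field_simp
      set s := w^2 / r with hs
      have hs0 : 0 < s := by positivity
      have hw2r : w^2 ≤ r := by
        have h1 : (w^2)^2 ≤ r^2 := by
          have : w^(4:ℕ) ≤ r^2 := by rw [hw4']; nlinarith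
          nlinarith [this]
        nlinarith [pow_pos hw0 2]
      have hs1 : s ≤ 1 := by rw [hs, div_le_one hrpos]; exact hw2r
      have hsin0 : Real.sin θ₀ = s := by
        rw [hθ₀, Real.sin_arccos]
        have h1 : 1 - x₀^2 = s^2 := by
          rw [hx₀, hs]
          field_simp
          nlinarith [hw4']
        rw [h1, Real.sqrt_sq hs0.le]
      have hθ₀s : s ≤ θ₀ := by
        rw [← hsin0]; exact Real.sin_le hθ₀pos.le
      have hsin_near : ∀ t ∈ Set.Icc (θ₀ - s/2) (θ₀ + s/2), s/2 ≤ Real.sin t := by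
        intro t ht
        have habs : |t - θ₀| ≤ s/2 := abs_le.mpr ⟨by linarith [ht.1], by linarith [ht.2]⟩
        have h2 := (abs_le.mp (sin_lip t θ₀)).1
        rw [hsin0] at h2
        have h3 := neg_abs_le (t - θ₀)
        linarith [(abs_le.mp (sin_lip t θ₀)).1]
      set μ₁ := w^(4:ℕ)/(4*r) with hμ₁def
      have hμ₁ : 0 < μ₁ := by positivity
      have hshμ : r * (s/2 * (s/2)) = μ₁ := by
        rw [hs, hμ₁def]; field_simp; ring
      have cosdiff_left : s/2 * (s/2) ≤ Real.cos (θ₀ - s/2) - Real.cos θ₀ := by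
        have := cos_diff (θ₀ - s/2) θ₀ (s/2) (by linarith)
          (fun t ht => hsin_near t ⟨ht.1, by linarith [ht.2]⟩)
        calc s/2 * (s/2) = s/2 * (θ₀ - (θ₀ - s/2)) := by ring_nf
          _ ≤ _ := this
      have cosdiff_right : s/2 * (s/2) ≤ Real.cos θ₀ - Real.cos (θ₀ + s/2) := by
        have := cos_diff θ₀ (θ₀ + s/2) (s/2) (by linarith)
          (fun t ht => hsin_near t ⟨by linarith [ht.1], ht.2⟩)
        calc s/2 * (s/2) = s/2 * (θ₀ + s/2 - θ₀) := by ring_nf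
          _ ≤ _ := this
      have hord1 : (0:ℝ) ≤ θ₀ - s/2 := by linarith
      have hord2 : θ₀ + s/2 ≤ π := by linarith
      have p1 : ‖∫ θ in (0:ℝ)..(θ₀ - s/2), EE r ν θ‖ ≤ 3/μ₁ := by
        apply lem1 r ν μ₁ 0 (θ₀ - s/2) hrpos.le le_rfl hord1 (by linarith) hμ₁
        left
        intro θ hθ
        have hc : Real.cos (θ₀ - s/2) ≤ Real.cos θ :=
          Real.cos_le_cos_of_nonneg_of_le_pi hθ.1 (by linarith) hθ.2
        have hm := mul_le_mul_of_nonneg_left cosdiff_left hrpos.le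
        rw [mul_sub] at hm
        nlinarith [mul_le_mul_of_nonneg_left hc hrpos.le]
      have p3 : ‖∫ θ in (θ₀ + s/2)..π, EE r ν θ‖ ≤ 3/μ₁ := by
        apply lem1 r ν μ₁ (θ₀ + s/2) π hrpos.le (by linarith) hord2 le_rfl hμ₁
        right
        intro θ hθ
        have hc : Real.cos θ ≤ Real.cos (θ₀ + s/2) :=
          Real.cos_le_cos_of_nonneg_of_le_pi (by linarith) hθ.2 hθ.1
        have hm := mul_le_mul_of_nonneg_left cosdiff_right hrpos.le
        rw [mul_sub] at hm
        nlinarith [mul_le_mul_of_nonneg_left hc hrpos.le]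
      have p2 : ‖∫ θ in (θ₀ - s/2)..(θ₀ + s/2), EE r ν θ‖ ≤ 16/w := by
        have hb := lem2 r ν (w^2/2) (θ₀ - s/2) (θ₀ + s/2) hord1 (by linarith) hord2
          (by positivity) ?_
        · have := sqrt_half_sq_bound w hw0
          linarith
        · intro t ht
          have h1 := hsin_near t ht
          have h2 : r * (s/2) ≤ r * Real.sin t := mul_le_mul_of_nonneg_left h1 hrpos.le
          have h3 : r * (s/2) = w^2/2 := by rw [hs]; field_simp
          linarith
      have hμ₁w : 3/μ₁ ≤ 12/w := by
        rw [hμ₁def, div_le_div_iff₀ (by positivity) hw0]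
        have h1 : r * w ≤ w^(4:ℕ) := by
          calc r * w ≤ w^(3:ℕ) * w := by nlinarith [hw3r]
            _ = w^(4:ℕ) := by ring
        have h2 : w ≤ w^(4:ℕ)/r := (le_div_iff₀ hrpos).mpr (by nlinarith)
        have h3 : (12:ℝ)*(w^(4:ℕ)/(4*r)) = 3*(w^(4:ℕ)/r) := by ring
        linarith
      have htot := split_three r ν 0 (θ₀ - s/2) (θ₀ + s/2) π (3/μ₁) (16/w) (3/μ₁) p1 p2 p3
      calc ‖∫ θ in (0:ℝ)..π, EE r ν θ‖ ≤ 3/μ₁ + 16/w + 3/μ₁ := htot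
        _ ≤ 12/w + 16/w + 12/w := by linarith
        _ ≤ 50/w := by rw [← add_div, ← add_div, div_le_div_iff₀ hw0 hw0]; nlinarith
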